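/- Let n ≥ 2, m ≥ 1, and let a_1, …, a_m, b_1, …, b_m, c_1, …, c_m be real numbers. For i ∈ {1, …, m} and j ∈ {1, …, n}, let H_{ij} = {x ∈ ℝ^n : a_i x_j + b_i ∑_{k ≠ j} x_k + c_i = 0}. If i₁ ≠ i₂, j₁ ≠ j₂, a_{i₁} ≠ b_{i₁} and a_{i₂} ≠ b_{i₂}, then H_{i₁,j₁} ∩ H_{i₁,j₂} ∩ H_{i₂,j₁} = H_{i₁,j₁} ∩ H_{i₁,j₂} ∩ H_{i₂,j₂} = H_{i₁,j₁} ∩ H_{i₂,j₁} ∩ H_{i₂,j₂}. -/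

import Mathlib

/-- The hyperplane `H_{ij} = {x ∈ ℝ^n : a_i x_j + b_i ∑_{k ≠ j} x_k + c_i = 0}` of the
permutation-invariant arrangement. -/
def Hset {m n : ℕ} (a b c : Fin m → ℝ) (i : Fin m) (j : Fin n) : Set (Fin n → ℝ) :=
  {x | a i * x j + b i * ∑ k ∈ Finset.univ.erase j, x k + c i = 0}

lemma sum_erase_eq {n : ℕ} (x : Fin n → ℝ) (j : Fin n) :
    ∑ k ∈ Finset.univ.erase j, x k = (∑ k, x k) - x j := by
  rw [Finset.sum_erase_eq_sub (Finset.mem_univ j)]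

lemma coord_eq {m n : ℕ} (a b c : Fin m → ℝ) (i : Fin m) (j₁ j₂ : Fin n)
    (ha : a i ≠ b i) {x : Fin n → ℝ}
    (h1 : x ∈ Hset a b c i j₁) (h2 : x ∈ Hset a b c i j₂) : x j₁ = x j₂ := by
  simp only [Hset, Set.mem_setOf_eq, sum_erase_eq] at h1 h2
  have h : (a i - b i) * (x j₁ - x j₂) = 0 := by linarith
  rcases mul_eq_zero.1 h with h | h
  · exact absurd (by linarith) ha
  · linarith

lemma mem_of_eq {m n : ℕ} (a b c : Fin m → ℝ) (i : Fin m) (j₁ j₂ : Fin n)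
    {x : Fin n → ℝ} (hx : x j₁ = x j₂)
    (h1 : x ∈ Hset a b c i j₁) : x ∈ Hset a b c i j₂ := by
  simp only [Hset, Set.mem_setOf_eq, sum_erase_eq] at h1 ⊢
  rw [← hx]; linarith

/-- The triple-intersection relations of the permutation-invariant arrangement. -/
theorem triple_intersections (m n : ℕ) (hn : 2 ≤ n) (hm : 1 ≤ m)
    (a b c : Fin m → ℝ) (i₁ i₂ : Fin m) (j₁ j₂ : Fin n)
    (hi : i₁ ≠ i₂) (hj : j₁ ≠ j₂) (ha1 : a i₁ ≠ b i₁) (ha2 : a i₂ ≠ b i₂) :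
    Hset a b c i₁ j₁ ∩ Hset a b c i₁ j₂ ∩ Hset a b c i₂ j₁ =
      Hset a b c i₁ j₁ ∩ Hset a b c i₁ j₂ ∩ Hset a b c i₂ j₂ ∧
    Hset a b c i₁ j₁ ∩ Hset a b c i₁ j₂ ∩ Hset a b c i₂ j₂ =
      Hset a b c i₁ j₁ ∩ Hset a b c i₂ j₁ ∩ Hset a b c i₂ j₂ := by
  constructor
  · ext x
    constructor
    · rintro ⟨⟨h11, h12⟩, h21⟩
      exact ⟨⟨h11, h12⟩, mem_of_eq a b c i₂ j₁ j₂ (coord_eq a b c i₁ j₁ j₂ ha1 h11 h12) h21⟩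
    · rintro ⟨⟨h11, h12⟩, h22⟩
      exact ⟨⟨h11, h12⟩, mem_of_eq a b c i₂ j₂ j₁ (coord_eq a b c i₁ j₁ j₂ ha1 h11 h12).symm h22⟩
  · ext x
    constructor
    · rintro ⟨⟨h11, h12⟩, h22⟩
      exact ⟨⟨h11, mem_of_eq a b c i₂ j₂ j₁ (coord_eq a b c i₁ j₁ j₂ ha1 h11 h12).symm h22⟩, h22⟩
    · rintro ⟨⟨h11, h21⟩, h22⟩
      exact ⟨⟨h11, mem_of_eq a b c i₁ j₁ j₂ (coord_eq a b c i₂ j₁ j₂ ha2 h21 h22) h11⟩, h22⟩
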